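/- For all propositional formulas α₁, …, αₙ and β: α₁, …, αₙ ⊢_Ł β (β is derivable from premises α₁, …, αₙ in Łukasiewicz's proof system) if and only if there exist distinct justification variables x₁, …, xₙ and a justification term t such that x₁:α₁, …, xₙ:αₙ ⊢_JLŁ t:β. -/
import Mathlib


/-- Propositional formulas built from countably many atoms with ¬ and →. -/
inductive PropForm : Type
  | atom : ℕ → PropForm
  | neg  : PropForm → PropForm
  | imp  : PropForm → PropForm → PropForm

/-- Łukasiewicz's Hilbert system: axioms L1, L2, L3 and modus ponens;
derivation from a set of premises `Γ`. -/
inductive LukDeriv : Set PropForm → PropForm → Prop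
  | prem {Γ φ} : φ ∈ Γ → LukDeriv Γ φ
  | ax1 {Γ} (φ ψ : PropForm) : LukDeriv Γ (φ.imp (ψ.imp φ))
  | ax2 {Γ} (φ ψ χ : PropForm) :
      LukDeriv Γ ((φ.imp (ψ.imp χ)).imp ((φ.imp ψ).imp (φ.imp χ)))
  | ax3 {Γ} (φ ψ : PropForm) :
      LukDeriv Γ (((φ.neg).imp (ψ.neg)).imp (ψ.imp φ))
  | mp {Γ φ ψ} : LukDeriv Γ (φ.imp ψ) → LukDeriv Γ φ → LukDeriv Γ ψ

/-- Justification terms: constants, variables, application and sum. -/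
inductive JTerm : Type
  | const : ℕ → JTerm
  | var   : ℕ → JTerm
  | app   : JTerm → JTerm → JTerm
  | sum   : JTerm → JTerm → JTerm

/-- Justification formulas: propositional formulas extended with `t : φ`. -/
inductive JForm : Type
  | atom : ℕ → JForm
  | neg  : JForm → JForm
  | imp  : JForm → JForm → JForm
  | just : JTerm → JForm → JForm

/-- Embedding of propositional formulas into justification formulas. -/
def PropForm.toJ : PropForm → JForm
  | .atom n  => .atom n
  | .neg φ   => .neg φ.toJ
  | .imp φ ψ => .imp φ.toJ ψ.toJ

/-- Schematic constant specification: a distinguished constant for each of the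
three Łukasiewicz axiom schemes. -/
def c1 : JTerm := .const 1
def c2 : JTerm := .const 2
def c3 : JTerm := .const 3

/-- The system JLŁ: the Application and Sum axioms, justified Łukasiewicz axioms
(with schematic constant specification `c1, c2, c3`), modus ponens and
application introduction; derivation from a set of premises `Γ`. -/
inductive JLDeriv : Set JForm → JForm → Prop
  | prem {Γ φ} : φ ∈ Γ → JLDeriv Γ φ
  | appAx {Γ} (s t : JTerm) (φ ψ : JForm) :
      JLDeriv Γ ((JForm.just s (φ.imp ψ)).imp
        ((JForm.just t φ).imp (JForm.just (s.app t) ψ)))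
  | sumL {Γ} (s t : JTerm) (ψ : JForm) :
      JLDeriv Γ ((JForm.just s ψ).imp (JForm.just (s.sum t) ψ))
  | sumR {Γ} (s t : JTerm) (ψ : JForm) :
      JLDeriv Γ ((JForm.just t ψ).imp (JForm.just (s.sum t) ψ))
  | jax1 {Γ} (φ ψ : JForm) :
      JLDeriv Γ (JForm.just c1 (φ.imp (ψ.imp φ)))
  | jax2 {Γ} (φ ψ χ : JForm) :
      JLDeriv Γ (JForm.just c2 ((φ.imp (ψ.imp χ)).imp ((φ.imp ψ).imp (φ.imp χ))))
  | jax3 {Γ} (φ ψ : JForm) :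
      JLDeriv Γ (JForm.just c3 (((φ.neg).imp (ψ.neg)).imp (ψ.imp φ)))
  | mp {Γ φ ψ} : JLDeriv Γ (φ.imp ψ) → JLDeriv Γ φ → JLDeriv Γ ψ
  | appIntro {Γ} {s t : JTerm} {φ ψ : JForm} :
      JLDeriv Γ (JForm.just s (φ.imp ψ)) → JLDeriv Γ (JForm.just t φ) →
      JLDeriv Γ (JForm.just (s.app t) ψ)

/-- Forget justifications. -/
def JForm.forget : JForm → PropForm
  | .atom n => .atom n
  | .neg φ => .neg φ.forget
  | .imp φ ψ => .imp φ.forget ψ.forget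
  | .just _ φ => φ.forget

lemma forget_toJ (φ : PropForm) : φ.toJ.forget = φ := by
  induction φ <;> simp [PropForm.toJ, JForm.forget, *]

lemma luk_id (Γ : Set PropForm) (φ : PropForm) : LukDeriv Γ (φ.imp φ) :=
  (LukDeriv.ax2 φ (φ.imp φ) φ).mp (LukDeriv.ax1 φ (φ.imp φ)) |>.mp (LukDeriv.ax1 φ φ)

lemma forget_sound {Γ : Set JForm} {φ : JForm} (h : JLDeriv Γ φ) :
    LukDeriv (JForm.forget '' Γ) φ.forget := by
  induction h with
  | prem h => exact .prem ⟨_, h, rfl⟩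
  | appAx s t φ ψ => exact luk_id _ _
  | sumL s t ψ => exact luk_id _ _
  | sumR s t ψ => exact luk_id _ _
  | jax1 φ ψ => exact .ax1 _ _
  | jax2 φ ψ χ => exact .ax2 _ _ _
  | jax3 φ ψ => exact .ax3 _ _
  | mp _ _ ih1 ih2 => exact ih1.mp ih2
  | appIntro _ _ ih1 ih2 => exact ih1.mp ih2

lemma jl_lift {n : ℕ} (α : Fin n → PropForm) {β : PropForm}
    (h : LukDeriv (Set.range α) β) :
    ∃ t : JTerm,
      JLDeriv (Set.range fun i : Fin n => JForm.just (JTerm.var i.val) (α i).toJ)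
        (JForm.just t β.toJ) := by
  induction h with
  | prem h =>
      obtain ⟨i, rfl⟩ := h
      exact ⟨.var i, .prem ⟨i, rfl⟩⟩
  | ax1 φ ψ => exact ⟨c1, .jax1 _ _⟩
  | ax2 φ ψ χ => exact ⟨c2, .jax2 _ _ _⟩
  | ax3 φ ψ => exact ⟨c3, .jax3 _ _⟩
  | mp _ _ ih1 ih2 =>
      obtain ⟨s, hs⟩ := ih1
      obtain ⟨t, ht⟩ := ih2
      exact ⟨s.app t, hs.appIntro ht⟩

/-- `α₁, …, αₙ ⊢_Ł β` iff there are distinct justification variables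
`x₁, …, xₙ` and a term `t` with `x₁:α₁, …, xₙ:αₙ ⊢_JLŁ t:β`. -/
theorem luk_iff_justified_from_premises (n : ℕ) (α : Fin n → PropForm) (β : PropForm) :
    LukDeriv (Set.range α) β ↔
      ∃ x : Fin n → ℕ, Function.Injective x ∧
        ∃ t : JTerm,
          JLDeriv (Set.range fun i => JForm.just (JTerm.var (x i)) (α i).toJ)
            (JForm.just t β.toJ) := by
  constructor
  · intro h
    obtain ⟨t, ht⟩ := jl_lift α h
    exact ⟨fun i => (i : ℕ), fun a b hab => Fin.ext hab, t, ht⟩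
  · rintro ⟨x, hx, t, ht⟩
    have h := forget_sound ht
    simp only [JForm.forget, forget_toJ] at h
    convert h using 1
    ext φ
    constructor
    · rintro ⟨i, rfl⟩
      exact ⟨_, ⟨i, rfl⟩, (forget_toJ _).symm ▸ rfl⟩
    · rintro ⟨ψ, ⟨i, rfl⟩, rfl⟩
      exact ⟨i, (forget_toJ _).symm⟩
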